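/- Let D = ℂ \ K be a co-compact domain with K compact and nonempty, and let (D''_j) be an exhaustion of D. Then (D''_j) admits a refinement (D'_j) with the following nesting property: whenever q₁ is a connected component of ℂ \ D'_{j₁} and q₂ is a connected component of ℂ \ D'_{j₂} with j₁ ≥ j₂ and q₁ ∩ q₂ ≠ ∅, then either q₁ = q₂ or q₁ is contained in the interior of q₂. -/

import Mathlib

open Set Metric Filter MeasureTheory

/-- A Jordan curve: the image of an injective continuous map of the unit circle into `ℂ`. -/
def IsJordanCurve (J : Set ℂ) : Prop :=
  ∃ f : ℂ → ℂ, ContinuousOn f (sphere (0 : ℂ) 1) ∧ Set.InjOn f (sphere (0 : ℂ) 1) ∧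
    J = f '' sphere (0 : ℂ) 1

/-- `R` is the closed Jordan region bounded by the Jordan curve `J`: the union of `J`
and the bounded connected component of its complement. -/
def IsClosedJordanRegionOf (R J : Set ℂ) : Prop :=
  IsJordanCurve J ∧ ∃ x ∈ Jᶜ, Bornology.IsBounded (connectedComponentIn Jᶜ x) ∧
    R = J ∪ connectedComponentIn Jᶜ x

/-- `p` is a connected component of the set `S ⊆ ℂ`. -/
def IsCompOf (p S : Set ℂ) : Prop := ∃ x ∈ S, p = connectedComponentIn S x

/-- A co-compact domain: a nonempty connected open subset of `ℂ` whose complement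
(`K` in the notation `D = ℂ \ K`) is compact. -/
def IsCoCompactDomain (D : Set ℂ) : Prop := IsOpen D ∧ IsConnected D ∧ IsCompact Dᶜ

/-- `D` is countably connected: it has countably many complementary components. -/
def CountablyConnected (D : Set ℂ) : Prop := {p : Set ℂ | IsCompOf p Dᶜ}.Countable

/-- An exhaustion of `D`: an increasing sequence of nonempty open connected sets with
union `D`, such that each complement `ℂ \ Dseq j` is a nonempty finite union of pairwise
disjoint closed Jordan regions whose boundary Jordan curves are contained in `D`. -/
def IsExhaustion (D : Set ℂ) (Dseq : ℕ → Set ℂ) : Prop :=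
  (∀ j, IsOpen (Dseq j)) ∧ (∀ j, IsConnected (Dseq j)) ∧
  (∀ j, Dseq j ⊆ Dseq (j + 1)) ∧ (⋃ j, Dseq j) = D ∧
  ∀ j, ∃ (n : ℕ) (Reg Cur : Fin (n + 1) → Set ℂ),
    (∀ i, IsClosedJordanRegionOf (Reg i) (Cur i)) ∧
    (∀ i, Cur i ⊆ D) ∧
    (Pairwise fun i k => Disjoint (Reg i) (Reg k)) ∧
    (Dseq j)ᶜ = ⋃ i, Reg i

/-- The exhaustion `Dseq` of `D` is a refinement of the exhaustion `Dseq'` of `D`: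
every connected component `p` of `ℂ \ Dseq j` is a connected component of
`ℂ \ Dseq' k` for some `k ≥ j`. -/
def IsRefinementOf (D : Set ℂ) (Dseq Dseq' : ℕ → Set ℂ) : Prop :=
  IsExhaustion D Dseq ∧
  ∀ j p, IsCompOf p (Dseq j)ᶜ → ∃ k, j ≤ k ∧ IsCompOf p (Dseq' k)ᶜ

/-- A circle domain: a co-compact domain each of whose complementary components is a
single point or a closed disk of positive radius. -/
def IsCircleDomain (G : Set ℂ) : Prop :=
  IsCoCompactDomain G ∧
  ∀ p, IsCompOf p Gᶜ → (∃ x, p = {x}) ∨ ∃ x r, 0 < r ∧ p = closedBall x r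

/-- A conformal map on `U`: an injective holomorphic function. -/
def IsConformalOn (f : ℂ → ℂ) (U : Set ℂ) : Prop :=
  DifferentiableOn ℂ f U ∧ Set.InjOn f U

/-- `f` fixes infinity on `U`: `|f z| → ∞` as `|z| → ∞` within `U`. -/
def FixesInfinity (f : ℂ → ℂ) (U : Set ℂ) : Prop :=
  Tendsto (fun z => ‖f z‖)
    (Filter.comap (fun z : ℂ => ‖z‖) atTop ⊓ 𝓟 U) atTop

lemma closure_compIn_subset {S : Set ℂ} (hS : IsOpen S) (x : ℂ) :
    closure (connectedComponentIn S x) ⊆ connectedComponentIn S x ∪ Sᶜ := by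
  intro y hy
  by_cases hyS : y ∈ S
  · left
    have hV : IsOpen (connectedComponentIn S y) := hS.connectedComponentIn
    have hyV : y ∈ connectedComponentIn S y := mem_connectedComponentIn hyS
    obtain ⟨z, hz1, hz2⟩ := mem_closure_iff.mp hy _ hV hyV
    have e1 := connectedComponentIn_eq hz1
    have e2 := connectedComponentIn_eq hz2
    rw [e2, ← e1]; exact hyV
  · right; exact hyS

lemma isCompact_of_isJordanCurve {J : Set ℂ} (h : IsJordanCurve J) : IsCompact J := by
  obtain ⟨f, hfc, -, hJ⟩ := h
  exact hJ ▸ (isCompact_sphere 0 1).image_of_continuousOn hfc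

lemma jordan_region_props {R J : Set ℂ} (h : IsClosedJordanRegionOf R J) :
    IsClosed R ∧ IsConnected R ∧ frontier R ⊆ J := by
  obtain ⟨hJC, x, hx, hbd, hR⟩ := h
  have hJcpt : IsCompact J := isCompact_of_isJordanCurve hJC
  have hJconn : IsConnected J := by
    obtain ⟨f, hfc, -, hJ⟩ := hJC
    rw [hJ]
    exact (isConnected_sphere (by rw [Complex.rank_real_complex]; norm_num) 0
      zero_le_one).image f hfc
  have hJcl : IsClosed J := hJcpt.isClosed
  set U := connectedComponentIn Jᶜ x with hU
  have hUopen : IsOpen U := hJcl.isOpen_compl.connectedComponentIn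
  have hUne : U.Nonempty := ⟨x, mem_connectedComponentIn hx⟩
  have hclU : closure U ⊆ U ∪ J := by
    have := closure_compIn_subset hJcl.isOpen_compl x
    simpa using this
  have hRcl : IsClosed R := by
    rw [hR, ← closure_eq_iff_isClosed]
    refine Subset.antisymm ?_ subset_closure
    calc closure (J ∪ U) = closure J ∪ closure U := closure_union
      _ ⊆ J ∪ (U ∪ J) := union_subset_union hJcl.closure_subset hclU
      _ ⊆ J ∪ U := by intro z hz; rcases hz with h | h | h <;> simp [h]
  have hfrne : (frontier U).Nonempty := by
    rw [nonempty_frontier_iff]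
    refine ⟨hUne, ?_⟩
    intro hu
    exact NormedSpace.unbounded_univ ℝ ℂ (hu ▸ hbd)
  have hfrJ : frontier U ⊆ J := by
    intro z hz
    have h1 : z ∈ closure U := hz.1
    have h2 : z ∉ U := fun hzU => hz.2 (by rwa [hUopen.interior_eq])
    rcases hclU h1 with h | h
    · exact absurd h h2
    · exact h
  have hRconn : IsConnected R := by
    have h1 : IsConnected (closure U) := ⟨hUne.closure, isPreconnected_connectedComponentIn.closure⟩
    have h2 : IsConnected (J ∪ closure U) := by
      refine IsConnected.union ?_ hJconn h1
      obtain ⟨z, hz⟩ := hfrne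
      exact ⟨z, hfrJ hz, hz.1⟩
    have : J ∪ closure U = R := by
      rw [hR]
      refine Subset.antisymm ?_ (union_subset_union_right _ subset_closure)
      refine union_subset subset_union_left ?_
      intro z hz
      rcases hclU hz with h | h
      · exact Or.inr h
      · exact Or.inl h
    rwa [this] at h2
  refine ⟨hRcl, hRconn, ?_⟩
  have hUint : U ⊆ interior R := hUopen.subset_interior_iff.mpr (hR ▸ subset_union_right)
  rw [hRcl.frontier_eq]
  intro z hz
  rcases (hR ▸ hz.1 : z ∈ J ∪ U) with h | h
  · exact h
  · exact absurd (hUint h) hz.2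

lemma comp_eq_of_finite_disjoint_union {n : ℕ} {Reg : Fin (n + 1) → Set ℂ}
    (hcl : ∀ i, IsClosed (Reg i)) (hconn : ∀ i, IsConnected (Reg i))
    (hdisj : Pairwise fun i k => Disjoint (Reg i) (Reg k))
    {x : ℂ} (hx : x ∈ ⋃ i, Reg i) :
    ∃ i, connectedComponentIn (⋃ i, Reg i) x = Reg i := by
  obtain ⟨i, hxi⟩ := mem_iUnion.mp hx
  refine ⟨i, ?_⟩
  set q := connectedComponentIn (⋃ i, Reg i) x with hq
  have hsub : Reg i ⊆ q :=
    (hconn i).isPreconnected.subset_connectedComponentIn hxi (subset_iUnion _ i)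
  refine Subset.antisymm ?_ hsub
  set B := ⋃ i', ⋃ (_ : i' ≠ i), Reg i' with hB
  have hBcl : IsClosed B :=
    isClosed_iUnion_of_finite fun i' => isClosed_iUnion_of_finite fun _ => hcl i'
  have hAB : ∀ z, z ∈ Reg i → z ∉ B := by
    intro z hz hzB
    obtain ⟨i', hi'⟩ := mem_iUnion.mp hzB
    obtain ⟨hne, hz'⟩ := mem_iUnion.mp hi'
    exact (hdisj hne.symm).le_bot ⟨hz, hz'⟩
  by_contra hns
  have hqsub : q ⊆ Reg i ∪ B := by
    intro z hz
    obtain ⟨i', hz'⟩ := mem_iUnion.mp (connectedComponentIn_subset _ _ hz)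
    by_cases h : i' = i
    · exact Or.inl (h ▸ hz')
    · exact Or.inr (mem_iUnion.mpr ⟨i', mem_iUnion.mpr ⟨h, hz'⟩⟩)
  have hpre : IsPreconnected q := isPreconnected_connectedComponentIn
  have h1 : (q ∩ Bᶜ).Nonempty := by
    refine ⟨x, ?_, hAB x hxi⟩
    exact mem_connectedComponentIn hx
  have h2 : (q ∩ (Reg i)ᶜ).Nonempty := by
    obtain ⟨z, hz⟩ := not_subset.mp hns
    exact ⟨z, hz.1, hz.2⟩
  have h3 : q ⊆ Bᶜ ∪ (Reg i)ᶜ := by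
    intro z _
    by_cases h : z ∈ Reg i
    · exact Or.inl (hAB z h)
    · exact Or.inr h
  obtain ⟨z, hzq, hz1, hz2⟩ := hpre _ _ hBcl.isOpen_compl (hcl i).isOpen_compl h3 h1 h2
  rcases hqsub hzq with h | h
  · exact hz2 h
  · exact hz1 h

/-- Every exhaustion admits a refinement with the nesting property
\eqref{sisalla}: intersecting complementary components of the refinement are either
equal or nested in the interior. -/
theorem exists_nested_refinement (D : Set ℂ) (hD : IsCoCompactDomain D)
    (hK : Dᶜ.Nonempty) (D'' : ℕ → Set ℂ) (hex : IsExhaustion D D'') :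
    ∃ D' : ℕ → Set ℂ, IsRefinementOf D D' D'' ∧
      ∀ j₁ j₂, j₂ ≤ j₁ → ∀ q₁ q₂, IsCompOf q₁ (D' j₁)ᶜ → IsCompOf q₂ (D' j₂)ᶜ →
        (q₁ ∩ q₂).Nonempty → q₁ = q₂ ∨ q₁ ⊆ interior q₂ := by
  obtain ⟨hopen, hconn, hmono, hUnion, hdecomp⟩ := hex
  choose n Reg Cur hRJ hCurD hdisj hcompl using hdecomp
  have hDmono : Monotone D'' := monotone_nat_of_le_succ hmono
  have hsubD : ∀ m, D'' m ⊆ D := fun m => hUnion ▸ subset_iUnion D'' m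
  have hcov : ∀ m, ∃ k, (⋃ i, Cur m i) ⊆ D'' k := by
    intro m
    have hcpt : IsCompact (⋃ i, Cur m i) :=
      isCompact_iUnion fun i => isCompact_of_isJordanCurve (hRJ m i).1
    obtain ⟨t, ht⟩ := hcpt.elim_finite_subcover D'' hopen
      (by rw [hUnion]; exact iUnion_subset (hCurD m))
    refine ⟨t.sup id, ht.trans ?_⟩
    exact iUnion₂_subset fun k hk => hDmono (Finset.le_sup (f := id) hk)
  choose g hg using hcov
  set F : ℕ → ℕ := fun j => Nat.rec 0 (fun _ fj => max (fj + 1) (g fj)) j with hF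
  have hFs : StrictMono F := strictMono_nat_of_lt_succ fun j =>
    lt_of_lt_of_le (Nat.lt_succ_self _) (le_max_left _ _)
  have hFle : ∀ j, j ≤ F j := fun j => hFs.le_apply
  have hFg : ∀ j, g (F j) ≤ F (j + 1) := fun j => le_max_right _ _
  refine ⟨fun j => D'' (F j), ⟨⟨fun j => hopen _, fun j => hconn _,
    fun j => hDmono (hFs (Nat.lt_succ_self j)).le, ?_,
    fun j => ⟨n (F j), Reg (F j), Cur (F j), hRJ (F j), hCurD (F j), hdisj (F j),
      hcompl (F j)⟩⟩, fun j p hp => ⟨F j, hFle j, hp⟩⟩, ?_⟩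
  · refine Subset.antisymm (iUnion_subset fun j => hsubD _) ?_
    rw [← hUnion]
    exact iUnion_subset fun m => (hDmono (hFle m)).trans (subset_iUnion (fun j => D'' (F j)) m)
  · intro j₁ j₂ hle q₁ q₂ hq₁ hq₂ hne
    obtain ⟨x₁, hx₁, hq₁e⟩ := hq₁
    obtain ⟨x₂, hx₂, hq₂e⟩ := hq₂
    obtain ⟨y, hy₁, hy₂⟩ := hne
    rcases eq_or_lt_of_le hle with heq | hlt
    · left
      subst heq
      rw [hq₁e] at hy₁
      rw [hq₂e] at hy₂
      rw [hq₁e, hq₂e, connectedComponentIn_eq hy₁, connectedComponentIn_eq hy₂]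
    · right
      -- curves at level F j₂ are inside D'' (F j₁)
      have hcurves : (⋃ i, Cur (F j₂) i) ⊆ D'' (F j₁) :=
        (hg (F j₂)).trans (hDmono ((hFg j₂).trans (hFs.monotone hlt)))
      -- q₁ ⊆ (D'' (F j₂))ᶜ
      have hsub12 : (D'' (F j₁))ᶜ ⊆ (D'' (F j₂))ᶜ :=
        compl_subset_compl.mpr (hDmono (hFs.monotone hle))
      have hq₁sub : q₁ ⊆ (D'' (F j₂))ᶜ :=
        (hq₁e ▸ connectedComponentIn_subset _ _).trans hsub12
      -- q₁ ⊆ q₂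
      have hq₁pre : IsPreconnected q₁ := hq₁e ▸ isPreconnected_connectedComponentIn
      have hy₂' : y ∈ connectedComponentIn (D'' (F j₂))ᶜ x₂ := hq₂e ▸ hy₂
      have hq₁q₂ : q₁ ⊆ q₂ := by
        have := hq₁pre.subset_connectedComponentIn hy₁ hq₁sub
        rwa [← connectedComponentIn_eq hy₂', ← hq₂e] at this
      -- identify q₂ with a region
      have hx₂' : x₂ ∈ ⋃ i, Reg (F j₂) i := hcompl (F j₂) ▸ hx₂
      obtain ⟨i, hqi⟩ := comp_eq_of_finite_disjoint_union
        (fun i => (jordan_region_props (hRJ (F j₂) i)).1)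
        (fun i => (jordan_region_props (hRJ (F j₂) i)).2.1)
        (hdisj (F j₂)) hx₂'
      have hq₂Reg : q₂ = Reg (F j₂) i := by
        rw [hq₂e, hcompl (F j₂)]
        exact hqi
      obtain ⟨hRcl, -, hRfr⟩ := jordan_region_props (hRJ (F j₂) i)
      -- q₁ avoids the frontier of q₂
      intro z hz
      have hzq₂ : z ∈ q₂ := hq₁q₂ hz
      have hzfr : z ∉ frontier q₂ := by
        rw [hq₂Reg]
        intro hfr
        have : z ∈ D'' (F j₁) := hcurves (mem_iUnion.mpr ⟨i, hRfr hfr⟩)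
        exact (hq₁e ▸ connectedComponentIn_subset _ _) hz this
      by_contra hzint
      exact hzfr (by rw [hq₂Reg] at hzq₂ ⊢; exact hRcl.frontier_eq ▸ ⟨hzq₂, hq₂Reg ▸ hzint⟩)
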